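/- Let m ∈ ℕ, σ > 0, and let x : (−∞,0] → ℝ^m be continuous with |x_t|_C := sup_{s≤t} |x(s)| > 0 for every t ≤ 0. Suppose that for every ν ∈ ℝ one has |x_t|_C·e^{ν·t} → 0 as t → −∞. Then inf_{t≤0} ( |x_{t−σ}|_C / |x_t|_C ) = 0. -/

import Mathlib

open Filter Set

/-- `|x_t|_C = sup_{s ≤ t} |x(s)|`. -/
noncomputable def normC {m : ℕ} (x : ℝ → EuclideanSpace ℝ (Fin m)) (t : ℝ) : ℝ :=
  ⨆ s : Set.Iic t, ‖x (s : ℝ)‖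

/-- If a continuous `x : (−∞,0] → ℝ^m` satisfies `|x_t|_C > 0` for all
`t ≤ 0` and decays super-exponentially (`|x_t|_C e^{νt} → 0` as `t → −∞` for every `ν`),
then `inf_{t ≤ 0} |x_{t−σ}|_C / |x_t|_C = 0`. -/
theorem superexp_decay_ratio_inf (m : ℕ) (σ : ℝ) (hσ : 0 < σ)
    (x : ℝ → EuclideanSpace ℝ (Fin m)) (hx : Continuous x)
    (hpos : ∀ t ≤ (0 : ℝ), 0 < normC x t)
    (hdecay : ∀ ν : ℝ, Tendsto (fun t => normC x t * Real.exp (ν * t)) atBot (nhds 0)) :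
    ⨅ t : Set.Iic (0 : ℝ), normC x ((t : ℝ) - σ) / normC x (t : ℝ) = 0 := by
  have hnonneg : ∀ t : ℝ, 0 ≤ normC x t := by
    intro t
    exact Real.iSup_nonneg fun s => norm_nonneg _
  set c : ℝ := ⨅ t : Set.Iic (0 : ℝ), normC x ((t : ℝ) - σ) / normC x (t : ℝ) with hc
  have hcge : 0 ≤ c :=
    Real.iInf_nonneg fun t => div_nonneg (hnonneg _) (hnonneg _)
  by_contra hne
  have hcpos : 0 < c := lt_of_le_of_ne hcge (Ne.symm hne)
  have hbb : BddBelow (Set.range fun t : Set.Iic (0:ℝ) =>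
      normC x ((t : ℝ) - σ) / normC x (t : ℝ)) :=
    ⟨0, by rintro y ⟨t, rfl⟩; exact div_nonneg (hnonneg _) (hnonneg _)⟩
  have hcle : ∀ t : ℝ, t ≤ 0 → c ≤ normC x (t - σ) / normC x t := by
    intro t ht
    exact ciInf_le hbb ⟨t, ht⟩
  have hstep : ∀ t : ℝ, t ≤ 0 → c * normC x t ≤ normC x (t - σ) := by
    intro t ht
    have := hcle t ht
    rw [le_div_iff₀ (hpos t ht)] at this
    linarith
  have hiter : ∀ n : ℕ, c ^ n * normC x 0 ≤ normC x (-(n * σ)) := by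
    intro n
    induction n with
    | zero => simp
    | succ n ih =>
      have ht : -((n : ℝ) * σ) ≤ 0 := neg_nonpos.mpr (by positivity)
      have h1 := hstep (-((n : ℝ) * σ)) ht
      have h2 : c * (c ^ n * normC x 0) ≤ c * normC x (-((n : ℝ) * σ)) :=
        mul_le_mul_of_nonneg_left ih hcpos.le
      have heq : -((n : ℝ) * σ) - σ = -(((n : ℕ) + 1 : ℝ) * σ) := by ring
      calc c ^ (n + 1) * normC x 0 = c * (c ^ n * normC x 0) := by ring
        _ ≤ c * normC x (-((n : ℝ) * σ)) := h2
        _ ≤ normC x (-((n : ℝ) * σ) - σ) := h1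
        _ = normC x (-(((n : ℕ) + 1 : ℝ) * σ)) := by rw [heq]
        _ = normC x (-((((n : ℕ) + 1 : ℕ) : ℝ) * σ)) := by push_cast; ring_nf
  set ν : ℝ := Real.log c / σ with hν
  have hseq : Tendsto (fun n : ℕ => -((n : ℝ) * σ)) atTop atBot := by
    apply tendsto_neg_atTop_atBot.comp
    exact Tendsto.atTop_mul_const hσ tendsto_natCast_atTop_atTop
  have hcomp : Tendsto (fun n : ℕ =>
      normC x (-((n : ℝ) * σ)) * Real.exp (ν * -((n : ℝ) * σ))) atTop (nhds 0) :=
    (hdecay ν).comp hseq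
  have hlb : ∀ n : ℕ,
      normC x 0 ≤ normC x (-((n : ℝ) * σ)) * Real.exp (ν * -((n : ℝ) * σ)) := by
    intro n
    have hexp : Real.exp (ν * -((n : ℝ) * σ)) = (c ^ n)⁻¹ := by
      have : ν * -((n : ℝ) * σ) = -((n : ℝ) * Real.log c) := by
        rw [hν]; field_simp
      rw [this, Real.exp_neg, Real.exp_nat_mul, Real.exp_log hcpos]
    have hp : (0:ℝ) < c ^ n := pow_pos hcpos n
    rw [hexp]
    calc normC x 0 = c ^ n * normC x 0 * (c ^ n)⁻¹ := by field_simp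
      _ ≤ normC x (-((n : ℝ) * σ)) * (c ^ n)⁻¹ :=
        mul_le_mul_of_nonneg_right (hiter n) (inv_nonneg.mpr hp.le)
  have h0 := ge_of_tendsto hcomp (Eventually.of_forall hlb)
  exact absurd h0 (not_le.mpr (hpos 0 le_rfl))
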